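/- Hereditary substitutions of simply kinded types commute: if γ₁ ⊢ U : j, and γ₁, X:j, γ₂ ⊢ V : k, and γ₁, X:j, γ₂, Y:k, γ₃ ⊢ W : l (simple kinding), then W[Y:=V]_k[X:=U]_j ≡ W[X:=U]_j[Y:=V[X:=U]_j]_k; analogous statements hold for simply well-formed kinds, neutral types, spines, and reducing applications. -/

import Mathlib

set_option autoImplicit true
set_option maxHeartbeats 1000000
set_option linter.unusedVariables false

/-- Shapes (simple kinds): `k ::= ∗ | k → k`. -/
inductive SKind : Type
  | star
  | arr (j k : SKind)
/-! ## Spine-form syntax of Fω.. types and kinds (de Bruijn representation). -/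

mutual
/-- Eliminations: a head applied to a spine of arguments, `E ::= F E⃗`. -/
inductive SpTy : Type
  | elim (h : SpHead) (s : SpSpine)

/-- Heads: `F ::= X | ⊤ | ⊥ | D → E | ∀X:K.E | λX:K.E`. -/
inductive SpHead : Type
  | var (x : ℕ)
  | top
  | bot
  | arr (a b : SpTy)
  | all (k : SpKd) (a : SpTy)
  | lam (k : SpKd) (a : SpTy)

/-- Spines: finite sequences of eliminations. -/
inductive SpSpine : Type
  | nil
  | cons (a : SpTy) (s : SpSpine)

/-- Kinds in spine form: `K ::= A..B | (X:J)→K`. -/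
inductive SpKd : Type
  | intv (a b : SpTy)
  | pi (j k : SpKd)
end

/-- Shape erasure of spine-form kinds: `|A..B| = ∗`, `|(X:J)→K| = |J| → |K|`. -/
def SpKd.shape : SpKd → SKind
  | .intv _ _ => .star
  | .pi j k => .arr j.shape k.shape

/-- Spine concatenation. -/
def SpSpine.append : SpSpine → SpSpine → SpSpine
  | .nil, s' => s'
  | .cons a s, s' => .cons a (s.append s')

/-- (Non-reducing) application of an elimination to a spine. -/
def SpTy.appSp : SpTy → SpSpine → SpTy
  | .elim h s, s' => .elim h (s.append s')

/-- (Non-reducing) application of an elimination to a single argument. -/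
def SpTy.app1 (e d : SpTy) : SpTy := e.appSp (.cons d .nil)

mutual
/-- Shift: increment all variables `≥ c` by one. -/
def SpTy.shift (c : ℕ) : SpTy → SpTy
  | .elim h s => .elim (h.shift c) (s.shift c)

def SpHead.shift (c : ℕ) : SpHead → SpHead
  | .var x => if x < c then .var x else .var (x + 1)
  | .top => .top
  | .bot => .bot
  | .arr a b => .arr (a.shift c) (b.shift c)
  | .all k a => .all (k.shift c) (a.shift (c + 1))
  | .lam k a => .lam (k.shift c) (a.shift (c + 1))

def SpSpine.shift (c : ℕ) : SpSpine → SpSpine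
  | .nil => .nil
  | .cons a s => .cons (a.shift c) (s.shift c)

def SpKd.shift (c : ℕ) : SpKd → SpKd
  | .intv a b => .intv (a.shift c) (b.shift c)
  | .pi j k => .pi (j.shift c) (k.shift (c + 1))
end

/-- Weakening by `n` fresh innermost variables. -/
def SpTy.weaken (n : ℕ) (e : SpTy) : SpTy := (SpTy.shift 0)^[n] e

/-- Weakening of kinds by `n` fresh innermost variables. -/
def SpKd.weaken (n : ℕ) (k : SpKd) : SpKd := (SpKd.shift 0)^[n] k

mutual
/-- Ordinary (capture-avoiding, non-hereditary) substitution on spine form. -/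
def SpTy.subst : SpTy → ℕ → SpTy → SpTy
  | .elim (.var y) s, x, v =>
      if y = x then v.appSp (s.subst x v)
      else .elim (.var (if x < y then y - 1 else y)) (s.subst x v)
  | .elim .top s, x, v => .elim .top (s.subst x v)
  | .elim .bot s, x, v => .elim .bot (s.subst x v)
  | .elim (.arr a b) s, x, v => .elim (.arr (a.subst x v) (b.subst x v)) (s.subst x v)
  | .elim (.all k a) s, x, v =>
      .elim (.all (k.subst x v) (a.subst (x + 1) (v.shift 0))) (s.subst x v)
  | .elim (.lam k a) s, x, v =>
      .elim (.lam (k.subst x v) (a.subst (x + 1) (v.shift 0))) (s.subst x v)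

def SpSpine.subst : SpSpine → ℕ → SpTy → SpSpine
  | .nil, _, _ => .nil
  | .cons a s, x, v => .cons (a.subst x v) (s.subst x v)

def SpKd.subst : SpKd → ℕ → SpTy → SpKd
  | .intv a b, x, v => .intv (a.subst x v) (b.subst x v)
  | .pi j k, x, v => .pi (j.subst x v) (k.subst (x + 1) (v.shift 0))
end

mutual
/-- Hereditary substitution `e[x := v]_k` of the elimination `v` for variable
`x` at shape `k`, defined mutually with reducing application by recursion on
the shape `k`. -/
def SpTy.hsubst : SpTy → ℕ → SKind → SpTy → SpTy
  | .elim (.var y) s, x, k, v =>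
      if y = x then SpTy.rappSp v k (s.hsubst x k v)
      else .elim (.var (if x < y then y - 1 else y)) (s.hsubst x k v)
  | .elim .top s, x, k, v => .elim .top (s.hsubst x k v)
  | .elim .bot s, x, k, v => .elim .bot (s.hsubst x k v)
  | .elim (.arr a b) s, x, k, v =>
      .elim (.arr (a.hsubst x k v) (b.hsubst x k v)) (s.hsubst x k v)
  | .elim (.all j a) s, x, k, v =>
      .elim (.all (j.hsubst x k v) (a.hsubst (x + 1) k (v.shift 0))) (s.hsubst x k v)
  | .elim (.lam j a) s, x, k, v =>
      .elim (.lam (j.hsubst x k v) (a.hsubst (x + 1) k (v.shift 0))) (s.hsubst x k v)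
termination_by e x k v => (sizeOf k, 1, sizeOf e)

/-- Hereditary substitution in spines (pointwise). -/
def SpSpine.hsubst : SpSpine → ℕ → SKind → SpTy → SpSpine
  | .nil, _, _, _ => .nil
  | .cons a s, x, k, v => .cons (a.hsubst x k v) (s.hsubst x k v)
termination_by s x k v => (sizeOf k, 1, sizeOf s)

/-- Hereditary substitution in kinds. -/
def SpKd.hsubst : SpKd → ℕ → SKind → SpTy → SpKd
  | .intv a b, x, k, v => .intv (a.hsubst x k v) (b.hsubst x k v)
  | .pi j k', x, k, v => .pi (j.hsubst x k v) (k'.hsubst (x + 1) k (v.shift 0))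
termination_by K x k v => (sizeOf k, 1, sizeOf K)

/-- Reducing application `d ·_k v` to a single argument:  β-contracts when `d`
is an operator abstraction and `k` is an arrow shape. -/
def SpTy.rapp : SpTy → SKind → SpTy → SpTy
  | d, .star, v => d.app1 v
  | .elim (.lam _ d') .nil, .arr k1 _, v => d'.hsubst 0 k1 v
  | .elim (.var y) s, .arr _ _, v => SpTy.app1 (.elim (.var y) s) v
  | .elim .top s, .arr _ _, v => SpTy.app1 (.elim .top s) v
  | .elim .bot s, .arr _ _, v => SpTy.app1 (.elim .bot s) v
  | .elim (.arr a b) s, .arr _ _, v => SpTy.app1 (.elim (.arr a b) s) v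
  | .elim (.all j a) s, .arr _ _, v => SpTy.app1 (.elim (.all j a) s) v
  | .elim (.lam j a) (.cons b s), .arr _ _, v => SpTy.app1 (.elim (.lam j a) (.cons b s)) v
termination_by d k v => (sizeOf k, 0, 0)

/-- Reducing application `d ·_k s⃗` to a spine, unwinding `s⃗` along `k`. -/
def SpTy.rappSp : SpTy → SKind → SpSpine → SpTy
  | d, _, .nil => d
  | d, .arr k1 k2, .cons e es => SpTy.rappSp (d.rapp (.arr k1 k2) e) k2 es
  | d, .star, .cons e es => d.appSp (.cons e es)
termination_by d k s => (sizeOf k, 0, sizeOf s + 1)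
end
/-! ## Simple kinding of β-normal η-long types in shape contexts.
A shape context assigns shapes to type-variable bindings (`some k`) and
marks term-variable bindings with `none`. -/

abbrev SCtx := List (Option SKind)

mutual
/-- Simply well-formed normal kinds: `γ ⊢ K kd`. -/
inductive SWfKd : SCtx → SpKd → Prop
  | intv : SKTy γ U .star → SKTy γ V .star → SWfKd γ (.intv U V)
  | pi : SWfKd γ J → SWfKd (some J.shape :: γ) K → SWfKd γ (.pi J K)

/-- Simple kinding of neutral types: `γ ⊢ne N : k` (a variable head applied
to a simply kinded spine). -/
inductive SKNe : SCtx → SpTy → SKind → Prop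
  | varApp : γ[x]? = some (some j) → SSp γ j s k → SKNe γ (.elim (.var x) s) k

/-- Simple spine kinding: `γ ⊢ j : V⃗ : k` — applying an operator of shape `j`
to the spine `V⃗` yields a type of shape `k`. -/
inductive SSp : SCtx → SKind → SpSpine → SKind → Prop
  | nil : SSp γ k .nil k
  | cons : SKTy γ U j → SSp γ k s l → SSp γ (.arr j k) (.cons U s) l

/-- Simple kinding of normal types: `γ ⊢ V : k`. -/
inductive SKTy : SCtx → SpTy → SKind → Prop
  | top : SKTy γ (.elim .top .nil) .star
  | bot : SKTy γ (.elim .bot .nil) .star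
  | arr : SKTy γ U .star → SKTy γ V .star → SKTy γ (.elim (.arr U V) .nil) .star
  | all : SWfKd γ K → SKTy (some K.shape :: γ) V .star →
      SKTy γ (.elim (.all K V) .nil) .star
  | lam : SWfKd γ J → SKTy (some J.shape :: γ) V k →
      SKTy γ (.elim (.lam J V) .nil) (.arr J.shape k)
  | ne : SKNe γ N .star → SKTy γ N .star
end
/-! structural lemmas -/

theorem shift_append : ∀ (s t : SpSpine) (c : ℕ),
    (s.append t).shift c = (s.shift c).append (t.shift c)
  | .nil, t, c => rfl
  | .cons a s, t, c => by
    simp [SpSpine.append, SpSpine.shift, shift_append s t c]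

mutual
theorem shiftshiftTy : ∀ (e : SpTy) (c d : ℕ), c ≤ d →
    (e.shift d).shift c = (e.shift c).shift (d + 1)
  | .elim h s, c, d, hcd => by
    simp [SpTy.shift, shiftshiftH h c d hcd, shiftshiftSp s c d hcd]

theorem shiftshiftH : ∀ (h : SpHead) (c d : ℕ), c ≤ d →
    (h.shift d).shift c = (h.shift c).shift (d + 1)
  | .var x, c, d, hcd => by
    simp only [SpHead.shift]
    split_ifs <;> simp_all [SpHead.shift] <;> (try split_ifs) <;> first | rfl | omega
  | .top, c, d, hcd => rfl
  | .bot, c, d, hcd => rfl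
  | .arr a b, c, d, hcd => by
    simp [SpHead.shift, shiftshiftTy a c d hcd, shiftshiftTy b c d hcd]
  | .all k a, c, d, hcd => by
    simp [SpHead.shift, shiftshiftKd k c d hcd,
      shiftshiftTy a (c+1) (d+1) (by omega)]
  | .lam k a, c, d, hcd => by
    simp [SpHead.shift, shiftshiftKd k c d hcd,
      shiftshiftTy a (c+1) (d+1) (by omega)]

theorem shiftshiftSp : ∀ (s : SpSpine) (c d : ℕ), c ≤ d →
    (s.shift d).shift c = (s.shift c).shift (d + 1)
  | .nil, c, d, hcd => rfl
  | .cons a s, c, d, hcd => by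
    simp [SpSpine.shift, shiftshiftTy a c d hcd, shiftshiftSp s c d hcd]

theorem shiftshiftKd : ∀ (k : SpKd) (c d : ℕ), c ≤ d →
    (k.shift d).shift c = (k.shift c).shift (d + 1)
  | .intv a b, c, d, hcd => by
    simp [SpKd.shift, shiftshiftTy a c d hcd, shiftshiftTy b c d hcd]
  | .pi j k, c, d, hcd => by
    simp [SpKd.shift, shiftshiftKd j c d hcd, shiftshiftKd k (c+1) (d+1) (by omega)]
end

-- cancel: substituting at the freshly inserted position
mutual
theorem cancelTy : ∀ (e : SpTy) (x : ℕ) (k : SKind) (v : SpTy),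
    (e.shift x).hsubst x k v = e
  | .elim (.var y) s, x, k, v => by
    simp only [SpTy.shift, SpHead.shift]
    split_ifs with h
    · simp only [SpTy.hsubst, cancelSp s x k v]
      rw [if_neg (by omega), if_neg (by omega)]
    · simp only [SpTy.hsubst, cancelSp s x k v]
      rw [if_neg (by omega), if_pos (by omega)]
      simp
  | .elim .top s, x, k, v => by
    simp [SpTy.shift, SpHead.shift, SpTy.hsubst, cancelSp s x k v]
  | .elim .bot s, x, k, v => by
    simp [SpTy.shift, SpHead.shift, SpTy.hsubst, cancelSp s x k v]
  | .elim (.arr a b) s, x, k, v => by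
    simp [SpTy.shift, SpHead.shift, SpTy.hsubst, cancelSp s x k v,
      cancelTy a x k v, cancelTy b x k v]
  | .elim (.all j a) s, x, k, v => by
    simp [SpTy.shift, SpHead.shift, SpTy.hsubst, cancelSp s x k v,
      cancelKd j x k v, cancelTy a (x+1) k (v.shift 0)]
  | .elim (.lam j a) s, x, k, v => by
    simp [SpTy.shift, SpHead.shift, SpTy.hsubst, cancelSp s x k v,
      cancelKd j x k v, cancelTy a (x+1) k (v.shift 0)]

theorem cancelSp : ∀ (s : SpSpine) (x : ℕ) (k : SKind) (v : SpTy),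
    (s.shift x).hsubst x k v = s
  | .nil, x, k, v => by simp [SpSpine.shift, SpSpine.hsubst]
  | .cons a s, x, k, v => by
    simp [SpSpine.shift, SpSpine.hsubst, cancelTy a x k v, cancelSp s x k v]

theorem cancelKd : ∀ (K : SpKd) (x : ℕ) (k : SKind) (v : SpTy),
    (K.shift x).hsubst x k v = K
  | .intv a b, x, k, v => by
    simp [SpKd.shift, SpKd.hsubst, cancelTy a x k v, cancelTy b x k v]
  | .pi j K, x, k, v => by
    simp [SpKd.shift, SpKd.hsubst, cancelKd j x k v, cancelKd K (x+1) k (v.shift 0)]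
end
theorem shift_appSp : ∀ (d : SpTy) (s : SpSpine) (c : ℕ),
    (d.appSp s).shift c = (d.shift c).appSp (s.shift c)
  | .elim h s0, s, c => by
    simp [SpTy.appSp, SpTy.shift, shift_append]

theorem shift_app1 (d v : SpTy) (c : ℕ) :
    (d.app1 v).shift c = (d.shift c).app1 (v.shift c) := by
  simp [SpTy.app1, shift_appSp, SpSpine.shift]

mutual
theorem d1Ty : ∀ (e : SpTy) (x c : ℕ) (k : SKind) (v : SpTy), c ≤ x →
    (e.hsubst x k v).shift c = (e.shift c).hsubst (x + 1) k (v.shift c)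
  | .elim (.var y) s, x, c, k, v, hcx => by
    by_cases hyx : y = x
    · subst hyx
      have h1 := d4 v k (s.hsubst y k v) c
      have h2 := d1Sp s y c k v hcx
      simp only [SpTy.shift, SpHead.shift, if_neg (show ¬ y < c by omega)]
      simp [SpTy.hsubst, h1, h2]
    · simp only [SpTy.hsubst, if_neg hyx, SpTy.shift, SpHead.shift]
      rw [d1Sp s x c k v hcx]
      split_ifs <;> simp_all [SpTy.hsubst] <;>
        first
          | rfl | omega
          | (split_ifs <;> first | rfl | omega | (congr 2 <;> omega))
          | (congr 2 <;> omega)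
  | .elim .top s, x, c, k, v, hcx => by
    simp [SpTy.hsubst, SpTy.shift, SpHead.shift, d1Sp s x c k v hcx]
  | .elim .bot s, x, c, k, v, hcx => by
    simp [SpTy.hsubst, SpTy.shift, SpHead.shift, d1Sp s x c k v hcx]
  | .elim (.arr a b) s, x, c, k, v, hcx => by
    simp [SpTy.hsubst, SpTy.shift, SpHead.shift, d1Sp s x c k v hcx,
      d1Ty a x c k v hcx, d1Ty b x c k v hcx]
  | .elim (.all j a) s, x, c, k, v, hcx => by
    simp only [SpTy.hsubst, SpTy.shift, SpHead.shift, d1Sp s x c k v hcx,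
      d1Kd j x c k v hcx, d1Ty a (x+1) (c+1) k (v.shift 0) (by omega)]
    rw [shiftshiftTy v 0 c (by omega)]
  | .elim (.lam j a) s, x, c, k, v, hcx => by
    simp only [SpTy.hsubst, SpTy.shift, SpHead.shift, d1Sp s x c k v hcx,
      d1Kd j x c k v hcx, d1Ty a (x+1) (c+1) k (v.shift 0) (by omega)]
    rw [shiftshiftTy v 0 c (by omega)]

termination_by e x c k v _ => (sizeOf k, 1, sizeOf e)

theorem d1Sp : ∀ (s : SpSpine) (x c : ℕ) (k : SKind) (v : SpTy), c ≤ x →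
    (s.hsubst x k v).shift c = (s.shift c).hsubst (x + 1) k (v.shift c)
  | .nil, x, c, k, v, hcx => by simp [SpSpine.hsubst, SpSpine.shift]
  | .cons a s, x, c, k, v, hcx => by
    simp [SpSpine.hsubst, SpSpine.shift, d1Ty a x c k v hcx, d1Sp s x c k v hcx]

termination_by s x c k v _ => (sizeOf k, 1, sizeOf s)

theorem d1Kd : ∀ (K : SpKd) (x c : ℕ) (k : SKind) (v : SpTy), c ≤ x →
    (K.hsubst x k v).shift c = (K.shift c).hsubst (x + 1) k (v.shift c)
  | .intv a b, x, c, k, v, hcx => by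
    simp [SpKd.hsubst, SpKd.shift, d1Ty a x c k v hcx, d1Ty b x c k v hcx]
  | .pi j K, x, c, k, v, hcx => by
    simp only [SpKd.hsubst, SpKd.shift, d1Kd j x c k v hcx,
      d1Kd K (x+1) (c+1) k (v.shift 0) (by omega)]
    rw [shiftshiftTy v 0 c (by omega)]

termination_by K x c k v _ => (sizeOf k, 1, sizeOf K)

theorem d2Ty : ∀ (e : SpTy) (x c : ℕ) (k : SKind) (v : SpTy), x ≤ c →
    (e.hsubst x k v).shift c = (e.shift (c + 1)).hsubst x k (v.shift c)
  | .elim (.var y) s, x, c, k, v, hxc => by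
    by_cases hyx : y = x
    · subst hyx
      have h1 := d4 v k (s.hsubst y k v) c
      have h2 := d2Sp s y c k v hxc
      simp only [SpTy.shift, SpHead.shift, if_pos (show y < c + 1 by omega)]
      simp [SpTy.hsubst, h1, h2]
    · simp only [SpTy.hsubst, if_neg hyx, SpTy.shift, SpHead.shift]
      rw [d2Sp s x c k v hxc]
      split_ifs <;> simp_all [SpTy.hsubst] <;>
        first
          | rfl | omega
          | (split_ifs <;> first | rfl | omega | (congr 2 <;> omega))
          | (congr 2 <;> omega)
  | .elim .top s, x, c, k, v, hxc => by
    simp [SpTy.hsubst, SpTy.shift, SpHead.shift, d2Sp s x c k v hxc]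
  | .elim .bot s, x, c, k, v, hxc => by
    simp [SpTy.hsubst, SpTy.shift, SpHead.shift, d2Sp s x c k v hxc]
  | .elim (.arr a b) s, x, c, k, v, hxc => by
    simp [SpTy.hsubst, SpTy.shift, SpHead.shift, d2Sp s x c k v hxc,
      d2Ty a x c k v hxc, d2Ty b x c k v hxc]
  | .elim (.all j a) s, x, c, k, v, hxc => by
    simp only [SpTy.hsubst, SpTy.shift, SpHead.shift, d2Sp s x c k v hxc,
      d2Kd j x c k v hxc, d2Ty a (x+1) (c+1) k (v.shift 0) (by omega)]
    rw [shiftshiftTy v 0 c (by omega)]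
  | .elim (.lam j a) s, x, c, k, v, hxc => by
    simp only [SpTy.hsubst, SpTy.shift, SpHead.shift, d2Sp s x c k v hxc,
      d2Kd j x c k v hxc, d2Ty a (x+1) (c+1) k (v.shift 0) (by omega)]
    rw [shiftshiftTy v 0 c (by omega)]

termination_by e x c k v _ => (sizeOf k, 1, sizeOf e)

theorem d2Sp : ∀ (s : SpSpine) (x c : ℕ) (k : SKind) (v : SpTy), x ≤ c →
    (s.hsubst x k v).shift c = (s.shift (c + 1)).hsubst x k (v.shift c)
  | .nil, x, c, k, v, hxc => by simp [SpSpine.hsubst, SpSpine.shift]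
  | .cons a s, x, c, k, v, hxc => by
    simp [SpSpine.hsubst, SpSpine.shift, d2Ty a x c k v hxc, d2Sp s x c k v hxc]

termination_by s x c k v _ => (sizeOf k, 1, sizeOf s)

theorem d2Kd : ∀ (K : SpKd) (x c : ℕ) (k : SKind) (v : SpTy), x ≤ c →
    (K.hsubst x k v).shift c = (K.shift (c + 1)).hsubst x k (v.shift c)
  | .intv a b, x, c, k, v, hxc => by
    simp [SpKd.hsubst, SpKd.shift, d2Ty a x c k v hxc, d2Ty b x c k v hxc]
  | .pi j K, x, c, k, v, hxc => by
    simp only [SpKd.hsubst, SpKd.shift, d2Kd j x c k v hxc,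
      d2Kd K (x+1) (c+1) k (v.shift 0) (by omega)]
    rw [shiftshiftTy v 0 c (by omega)]

termination_by K x c k v _ => (sizeOf k, 1, sizeOf K)

theorem d3 : ∀ (d : SpTy) (k : SKind) (v : SpTy) (c : ℕ),
    (d.rapp k v).shift c = (d.shift c).rapp k (v.shift c)
  | d, .star, v, c => by
    cases d with
    | elim h s =>
      cases h <;> simp [SpTy.rapp, shift_app1, SpTy.shift, SpHead.shift] <;>
        split_ifs <;> simp [SpTy.rapp, shift_app1, SpTy.shift, SpHead.shift]
  | .elim (.var y) s, .arr k1 k2, v, c => by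
    simp only [SpTy.rapp, shift_app1, SpTy.shift, SpHead.shift]
    split_ifs <;> simp [SpTy.rapp, shift_app1, SpTy.shift, SpHead.shift]
  | .elim .top s, .arr k1 k2, v, c => by
    simp [SpTy.rapp, shift_app1, SpTy.shift, SpHead.shift]
  | .elim .bot s, .arr k1 k2, v, c => by
    simp [SpTy.rapp, shift_app1, SpTy.shift, SpHead.shift]
  | .elim (.arr a b) s, .arr k1 k2, v, c => by
    simp [SpTy.rapp, shift_app1, SpTy.shift, SpHead.shift]
  | .elim (.all j a) s, .arr k1 k2, v, c => by
    simp [SpTy.rapp, shift_app1, SpTy.shift, SpHead.shift]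
  | .elim (.lam j a) .nil, .arr k1 k2, v, c => by
    simp only [SpTy.rapp, SpTy.shift, SpHead.shift, SpSpine.shift]
    exact d2Ty a 0 c k1 v (by omega)
  | .elim (.lam j a) (.cons b s), .arr k1 k2, v, c => by
    simp [SpTy.rapp, shift_app1, SpTy.shift, SpHead.shift, SpSpine.shift]

termination_by d k v c => (sizeOf k, 0, 0)

theorem d4 : ∀ (d : SpTy) (k : SKind) (s : SpSpine) (c : ℕ),
    (d.rappSp k s).shift c = (d.shift c).rappSp k (s.shift c)
  | d, k, .nil, c => by simp [SpTy.rappSp, SpSpine.shift]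
  | d, .star, .cons e es, c => by
    simp [SpTy.rappSp, SpSpine.shift, shift_appSp]
  | d, .arr k1 k2, .cons e es, c => by
    simp only [SpTy.rappSp, SpSpine.shift]
    rw [d4 (d.rapp (.arr k1 k2) e) k2 es c, d3 d (.arr k1 k2) e c]
termination_by d k s c => (sizeOf k, 0, sizeOf s + 1)

end
theorem weaken_zero (e : SpTy) : e.weaken 0 = e := rfl

theorem weaken_succ (e : SpTy) (n : ℕ) : e.weaken (n+1) = (e.weaken n).shift 0 :=
  Function.iterate_succ_apply' _ _ _

theorem weaken_add (e : SpTy) (m n : ℕ) : (e.weaken m).weaken n = e.weaken (n + m) :=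
  (Function.iterate_add_apply _ _ _ _).symm

theorem weaken_as_shift : ∀ (m x : ℕ), x ≤ m → ∀ (e : SpTy),
    e.weaken (m+1) = (e.weaken m).shift x := by
  intro m
  induction m with
  | zero => intro x hx e; interval_cases x; exact weaken_succ e 0
  | succ m ih =>
    intro x hx e
    rcases Nat.eq_zero_or_pos x with h0 | hpos
    · subst h0; exact weaken_succ e (m+1)
    · obtain ⟨x', rfl⟩ := Nat.exists_eq_succ_of_ne_zero (by omega : x ≠ 0)
      rw [weaken_succ e (m+1), ih x' (by omega) e, shiftshiftTy _ 0 x' (by omega),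
        ← weaken_succ e m, ← ih x' (by omega) e]

theorem weaken_cancel (m x : ℕ) (hx : x ≤ m) (e : SpTy) (k : SKind) (v : SpTy) :
    (e.weaken (m+1)).hsubst x k v = e.weaken m := by
  rw [weaken_as_shift m x hx e, cancelTy]

theorem hsubst_weaken : ∀ (n : ℕ) (e : SpTy) (x : ℕ) (k : SKind) (v : SpTy),
    (e.hsubst x k v).weaken n = (e.weaken n).hsubst (x + n) k (v.weaken n) := by
  intro n
  induction n with
  | zero => intro e x k v; simp [weaken_zero]
  | succ n ih =>
    intro e x k v
    rw [weaken_succ, ih, d1Ty _ _ 0 _ _ (by omega), ← weaken_succ, ← weaken_succ,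
      Nat.add_assoc]

theorem shape_shift : ∀ (K : SpKd) (c : ℕ), (K.shift c).shape = K.shape
  | .intv _ _, c => by simp [SpKd.shift, SpKd.shape]
  | .pi j k, c => by simp [SpKd.shift, SpKd.shape, shape_shift j c, shape_shift k (c+1)]

theorem shape_hsubst : ∀ (K : SpKd) (x : ℕ) (k : SKind) (v : SpTy),
    (K.hsubst x k v).shape = K.shape
  | .intv _ _, x, k, v => by simp [SpKd.hsubst, SpKd.shape]
  | .pi j K, x, k, v => by
    simp [SpKd.hsubst, SpKd.shape, shape_hsubst j x k v, shape_hsubst K (x+1) k (v.shift 0)]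

mutual
theorem wkTy : ∀ (Γ₂ Γ₁ : SCtx) (A : Option SKind) (e : SpTy) (k : SKind),
    SKTy (Γ₂ ++ Γ₁) e k → SKTy (Γ₂ ++ A :: Γ₁) (e.shift Γ₂.length) k
  | Γ₂, Γ₁, A, e, k, h => by
    cases h with
    | top => exact SKTy.top
    | bot => exact SKTy.bot
    | arr hU hV =>
      simpa [SpTy.shift, SpHead.shift, SpSpine.shift] using
        SKTy.arr (wkTy Γ₂ Γ₁ A _ _ hU) (wkTy Γ₂ Γ₁ A _ _ hV)
    | all hK hV =>
      have h2 := wkTy (some (SpKd.shape _) :: Γ₂) Γ₁ A _ _ hV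
      simp only [List.cons_append, List.length_cons] at h2
      simpa [SpTy.shift, SpHead.shift, SpSpine.shift] using
        SKTy.all (wkKd Γ₂ Γ₁ A _ hK) (by rw [shape_shift]; exact h2)
    | lam hK hV =>
      have h2 := wkTy (some (SpKd.shape _) :: Γ₂) Γ₁ A _ _ hV
      simp only [List.cons_append, List.length_cons] at h2
      have := SKTy.lam (wkKd Γ₂ Γ₁ A _ hK) (by rw [shape_shift]; exact h2)
      rw [shape_shift] at this
      simpa [SpTy.shift, SpHead.shift, SpSpine.shift] using this
    | ne hN => exact SKTy.ne (wkNe Γ₂ Γ₁ A _ _ hN)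

termination_by Γ₂ Γ₁ A e k h => (sizeOf e, 1)

theorem wkNe : ∀ (Γ₂ Γ₁ : SCtx) (A : Option SKind) (e : SpTy) (k : SKind),
    SKNe (Γ₂ ++ Γ₁) e k → SKNe (Γ₂ ++ A :: Γ₁) (e.shift Γ₂.length) k
  | Γ₂, Γ₁, A, e, k, h => by
    cases h with
    | @varApp _ x j s _ hx hs =>
      have hs' := wkSp Γ₂ Γ₁ A _ _ _ hs
      simp only [SpTy.shift, SpHead.shift, SpSpine.shift]
      split_ifs with hlt
      · exact SKNe.varApp (by
          rw [List.getElem?_append_left hlt] at hx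
          rw [List.getElem?_append_left hlt]; exact hx) hs'
      · refine SKNe.varApp ?_ hs'
        rw [List.getElem?_append_right (by omega)] at hx
        rw [List.getElem?_append_right (by omega)]
        simpa [List.getElem?_cons, Nat.sub_add_comm, show Γ₂.length ≤ x by omega,
          show x + 1 - Γ₂.length = (x - Γ₂.length) + 1 by omega] using hx

termination_by Γ₂ Γ₁ A e k h => (sizeOf e, 0)

theorem wkSp : ∀ (Γ₂ Γ₁ : SCtx) (A : Option SKind) (j : SKind) (s : SpSpine) (k : SKind),
    SSp (Γ₂ ++ Γ₁) j s k → SSp (Γ₂ ++ A :: Γ₁) j (s.shift Γ₂.length) k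
  | Γ₂, Γ₁, A, j, s, k, h => by
    cases h with
    | nil => simpa [SpSpine.shift] using SSp.nil
    | cons hU hs =>
      simpa [SpSpine.shift] using
        SSp.cons (wkTy Γ₂ Γ₁ A _ _ hU) (wkSp Γ₂ Γ₁ A _ _ _ hs)

termination_by Γ₂ Γ₁ A j s k h => (sizeOf s, 0)

theorem wkKd : ∀ (Γ₂ Γ₁ : SCtx) (A : Option SKind) (K : SpKd),
    SWfKd (Γ₂ ++ Γ₁) K → SWfKd (Γ₂ ++ A :: Γ₁) (K.shift Γ₂.length)
  | Γ₂, Γ₁, A, K, h => by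
    cases h with
    | intv hU hV =>
      simpa [SpKd.shift] using
        SWfKd.intv (wkTy Γ₂ Γ₁ A _ _ hU) (wkTy Γ₂ Γ₁ A _ _ hV)
    | pi hJ hK =>
      have h2 := wkKd (some (SpKd.shape _) :: Γ₂) Γ₁ A _ hK
      simp only [List.cons_append, List.length_cons] at h2
      simpa [SpKd.shift] using
        SWfKd.pi (wkKd Γ₂ Γ₁ A _ hJ) (by rw [shape_shift]; exact h2)
termination_by Γ₂ Γ₁ A K h => (sizeOf K, 0)
end

/-- iterated front weakening -/
theorem wkTyN : ∀ (Δ Γ : SCtx) (e : SpTy) (k : SKind),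
    SKTy Γ e k → SKTy (Δ ++ Γ) (e.weaken Δ.length) k := by
  intro Δ
  induction Δ with
  | nil => intro Γ e k h; simpa [weaken_zero] using h
  | cons B Δ ih =>
    intro Γ e k h
    have := wkTy [] (Δ ++ Γ) B _ _ (ih Γ e k h)
    simpa [weaken_succ] using this
mutual
theorem sTy : ∀ (j : SKind) (Δ₂ Δ₁ : SCtx) (U W : SpTy) (l : SKind),
    SKTy Δ₁ U j → SKTy (Δ₂ ++ some j :: Δ₁) W l →
    SKTy (Δ₂ ++ Δ₁) (W.hsubst Δ₂.length j (U.weaken Δ₂.length)) l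
  | j, Δ₂, Δ₁, U, W, l, hU, h => by
    cases h with
    | top => simpa [SpTy.hsubst, SpSpine.hsubst] using SKTy.top
    | bot => simpa [SpTy.hsubst, SpSpine.hsubst] using SKTy.bot
    | arr ha hb =>
      simpa [SpTy.hsubst, SpSpine.hsubst] using
        SKTy.arr (sTy j Δ₂ Δ₁ U _ _ hU ha) (sTy j Δ₂ Δ₁ U _ _ hU hb)
    | all hK hV =>
      have h2 := sTy j (some (SpKd.shape _) :: Δ₂) Δ₁ U _ _ hU hV
      simp only [List.cons_append, List.length_cons, weaken_succ] at h2
      simpa [SpTy.hsubst, SpSpine.hsubst, weaken_succ] using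
        SKTy.all (sKd j Δ₂ Δ₁ U _ hU hK) (by rw [shape_hsubst]; exact h2)
    | lam hK hV =>
      have h2 := sTy j (some (SpKd.shape _) :: Δ₂) Δ₁ U _ _ hU hV
      simp only [List.cons_append, List.length_cons, weaken_succ] at h2
      have h3 := SKTy.lam (sKd j Δ₂ Δ₁ U _ hU hK) (by rw [shape_hsubst]; exact h2)
      rw [shape_hsubst] at h3
      simpa [SpTy.hsubst, SpSpine.hsubst, weaken_succ] using h3
    | ne hN =>
      rcases sNe j Δ₂ Δ₁ U _ _ hU hN with h | h
      · exact h
      · exact SKTy.ne h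
termination_by j Δ₂ Δ₁ U W l hU h => (sizeOf j, 1, sizeOf W, 1)

theorem sKd : ∀ (j : SKind) (Δ₂ Δ₁ : SCtx) (U : SpTy) (K : SpKd),
    SKTy Δ₁ U j → SWfKd (Δ₂ ++ some j :: Δ₁) K →
    SWfKd (Δ₂ ++ Δ₁) (K.hsubst Δ₂.length j (U.weaken Δ₂.length))
  | j, Δ₂, Δ₁, U, K, hU, h => by
    cases h with
    | intv ha hb =>
      simpa [SpKd.hsubst] using
        SWfKd.intv (sTy j Δ₂ Δ₁ U _ _ hU ha) (sTy j Δ₂ Δ₁ U _ _ hU hb)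
    | pi hJ hK =>
      have h2 := sKd j (some (SpKd.shape _) :: Δ₂) Δ₁ U _ hU hK
      simp only [List.cons_append, List.length_cons, weaken_succ] at h2
      simpa [SpKd.hsubst, weaken_succ] using
        SWfKd.pi (sKd j Δ₂ Δ₁ U _ hU hJ) (by rw [shape_hsubst]; exact h2)
termination_by j Δ₂ Δ₁ U K hU h => (sizeOf j, 1, sizeOf K, 1)

theorem sNe : ∀ (j : SKind) (Δ₂ Δ₁ : SCtx) (U N : SpTy) (l : SKind),
    SKTy Δ₁ U j → SKNe (Δ₂ ++ some j :: Δ₁) N l →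
    SKTy (Δ₂ ++ Δ₁) (N.hsubst Δ₂.length j (U.weaken Δ₂.length)) l ∨
    SKNe (Δ₂ ++ Δ₁) (N.hsubst Δ₂.length j (U.weaken Δ₂.length)) l
  | j, Δ₂, Δ₁, U, N, l, hU, h => by
    cases h with
    | @varApp _ x j' s _ hx hs =>
      have hs' := sSp j Δ₂ Δ₁ U _ _ _ hU hs
      by_cases hxn : x = Δ₂.length
      · subst hxn
        rw [List.getElem?_append_right (le_refl _), Nat.sub_self] at hx
        simp only [List.getElem?_cons_zero, Option.some_inj] at hx
        subst hx
        left
        have hUw : SKTy (Δ₂ ++ Δ₁) (U.weaken Δ₂.length) j := wkTyN Δ₂ Δ₁ U j hU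
        simp only [SpTy.hsubst, if_pos rfl]
        exact rappK j (Δ₂ ++ Δ₁) _ _ _ hUw hs'
      · right
        simp only [SpTy.hsubst, if_neg hxn]
        refine SKNe.varApp ?_ hs'
        by_cases hlt : x < Δ₂.length
        · rw [if_neg (by omega)]
          rw [List.getElem?_append_left hlt] at hx
          rw [List.getElem?_append_left hlt]; exact hx
        · rw [if_pos (by omega)]
          rw [List.getElem?_append_right (by omega)] at hx
          rw [List.getElem?_append_right (by omega)]
          have hx1 : Δ₂.length < x := by omega
          rw [show x - Δ₂.length = (x - Δ₂.length - 1) + 1 by omega] at hx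
          simp only [List.getElem?_cons_succ] at hx
          rw [show x - 1 - Δ₂.length = x - Δ₂.length - 1 by omega]
          exact hx
termination_by j Δ₂ Δ₁ U N l hU h => (sizeOf j, 1, sizeOf N, 0)

theorem sSp : ∀ (j : SKind) (Δ₂ Δ₁ : SCtx) (U : SpTy) (l₁ : SKind) (s : SpSpine) (l₂ : SKind),
    SKTy Δ₁ U j → SSp (Δ₂ ++ some j :: Δ₁) l₁ s l₂ →
    SSp (Δ₂ ++ Δ₁) l₁ (s.hsubst Δ₂.length j (U.weaken Δ₂.length)) l₂
  | j, Δ₂, Δ₁, U, l₁, s, l₂, hU, h => by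
    cases h with
    | nil => simpa [SpSpine.hsubst] using SSp.nil
    | cons ha hs =>
      simpa [SpSpine.hsubst] using
        SSp.cons (sTy j Δ₂ Δ₁ U _ _ hU ha) (sSp j Δ₂ Δ₁ U _ _ _ hU hs)
termination_by j Δ₂ Δ₁ U l₁ s l₂ hU h => (sizeOf j, 1, sizeOf s, 0)

theorem rappK : ∀ (j : SKind) (Δ : SCtx) (d : SpTy) (s : SpSpine) (l : SKind),
    SKTy Δ d j → SSp Δ j s l → SKTy Δ (SpTy.rappSp d j s) l
  | j, Δ, d, s, l, hd, hs => by
    cases hs with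
    | nil => simpa [SpTy.rappSp] using hd
    | @cons _ a j1 j2 s2 _ ha hs2 =>
      cases hd with
      | @lam _ J V kk hJ hV =>
        have hbody := sTy _ [] Δ a _ _ ha hV
        simp only [List.nil_append, List.length_nil, weaken_zero] at hbody
        simp only [SpTy.rappSp, SpTy.rapp]
        exact rappK j2 Δ _ _ _ hbody hs2
termination_by j Δ d s l hd hs => (sizeOf j, 0, sizeOf s, 0)
end
theorem hsubst_var_hit (x : ℕ) (s : SpSpine) (k : SKind) (v : SpTy) :
    (SpTy.elim (.var x) s).hsubst x k v = SpTy.rappSp v k (s.hsubst x k v) := by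
  simp [SpTy.hsubst]

theorem hsubst_var_miss (y x : ℕ) (h : y ≠ x) (s : SpSpine) (k : SKind) (v : SpTy) :
    (SpTy.elim (.var y) s).hsubst x k v =
      SpTy.elim (.var (if x < y then y - 1 else y)) (s.hsubst x k v) := by
  simp [SpTy.hsubst, h]

mutual
theorem commTy : ∀ (j k : SKind) (Γ₃ Γ₂ Γ₁ : SCtx) (U V W : SpTy) (l : SKind),
    SKTy Γ₁ U j → SKTy (Γ₂ ++ some j :: Γ₁) V k →
    SKTy (Γ₃ ++ some k :: Γ₂ ++ some j :: Γ₁) W l →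
    ((W.hsubst Γ₃.length k (V.weaken Γ₃.length)).hsubst
        (Γ₃.length + Γ₂.length) j (U.weaken (Γ₃.length + Γ₂.length))) =
    ((W.hsubst (Γ₃.length + Γ₂.length + 1) j
          (U.weaken (Γ₃.length + Γ₂.length + 1))).hsubst
        Γ₃.length k ((V.hsubst Γ₂.length j (U.weaken Γ₂.length)).weaken Γ₃.length))
  | j, k, Γ₃, Γ₂, Γ₁, U, V, W, l, hU, hV, hW => by
    cases hW with
    | top => simp [SpTy.hsubst, SpSpine.hsubst]
    | bot => simp [SpTy.hsubst, SpSpine.hsubst]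
    | arr ha hb =>
      simp [SpTy.hsubst, SpSpine.hsubst,
        commTy j k Γ₃ Γ₂ Γ₁ U V _ _ hU hV ha,
        commTy j k Γ₃ Γ₂ Γ₁ U V _ _ hU hV hb]
    | @all _ K a hK ha =>
      have IH := commTy j k (some K.shape :: Γ₃) Γ₂ Γ₁ U V _ _ hU hV
        (by simpa using ha)
      have IHK := commKd j k Γ₃ Γ₂ Γ₁ U V K hU hV hK
      simp only [List.length_cons] at IH
      rw [show Γ₃.length + 1 + Γ₂.length = Γ₃.length + Γ₂.length + 1 from by omega] at IH
      simp only [SpTy.hsubst, SpSpine.hsubst, ← weaken_succ]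
      rw [IH, IHK]
    | @lam _ J a kb hK ha =>
      have IH := commTy j k (some J.shape :: Γ₃) Γ₂ Γ₁ U V _ _ hU hV
        (by simpa using ha)
      have IHK := commKd j k Γ₃ Γ₂ Γ₁ U V J hU hV hK
      simp only [List.length_cons] at IH
      rw [show Γ₃.length + 1 + Γ₂.length = Γ₃.length + Γ₂.length + 1 from by omega] at IH
      simp only [SpTy.hsubst, SpSpine.hsubst, ← weaken_succ]
      rw [IH, IHK]
    | ne hN => exact commNe j k Γ₃ Γ₂ Γ₁ U V _ _ hU hV hN
termination_by j k Γ₃ Γ₂ Γ₁ U V W l hU hV hW =>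
  (sizeOf j + sizeOf k, 2, sizeOf W, 1)
decreasing_by
  all_goals simp_wf
  all_goals try subst_vars
  all_goals simp [Prod.lex_def]
  all_goals omega

theorem commKd : ∀ (j k : SKind) (Γ₃ Γ₂ Γ₁ : SCtx) (U V : SpTy) (K : SpKd),
    SKTy Γ₁ U j → SKTy (Γ₂ ++ some j :: Γ₁) V k →
    SWfKd (Γ₃ ++ some k :: Γ₂ ++ some j :: Γ₁) K →
    ((K.hsubst Γ₃.length k (V.weaken Γ₃.length)).hsubst
        (Γ₃.length + Γ₂.length) j (U.weaken (Γ₃.length + Γ₂.length))) =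
    ((K.hsubst (Γ₃.length + Γ₂.length + 1) j
          (U.weaken (Γ₃.length + Γ₂.length + 1))).hsubst
        Γ₃.length k ((V.hsubst Γ₂.length j (U.weaken Γ₂.length)).weaken Γ₃.length))
  | j, k, Γ₃, Γ₂, Γ₁, U, V, K, hU, hV, hK => by
    cases hK with
    | intv ha hb =>
      simp [SpKd.hsubst,
        commTy j k Γ₃ Γ₂ Γ₁ U V _ _ hU hV ha,
        commTy j k Γ₃ Γ₂ Γ₁ U V _ _ hU hV hb]
    | @pi _ J K2 hJ hK2 =>
      have IH := commKd j k (some J.shape :: Γ₃) Γ₂ Γ₁ U V K2 hU hV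
        (by simpa using hK2)
      have IHJ := commKd j k Γ₃ Γ₂ Γ₁ U V J hU hV hJ
      simp only [List.length_cons] at IH
      rw [show Γ₃.length + 1 + Γ₂.length = Γ₃.length + Γ₂.length + 1 from by omega] at IH
      simp only [SpKd.hsubst, ← weaken_succ]
      rw [IH, IHJ]
termination_by j k Γ₃ Γ₂ Γ₁ U V K hU hV hK =>
  (sizeOf j + sizeOf k, 2, sizeOf K, 1)
decreasing_by
  all_goals simp_wf
  all_goals try subst_vars
  all_goals simp [Prod.lex_def]
  all_goals omega

theorem commNe : ∀ (j k : SKind) (Γ₃ Γ₂ Γ₁ : SCtx) (U V N : SpTy) (l : SKind),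
    SKTy Γ₁ U j → SKTy (Γ₂ ++ some j :: Γ₁) V k →
    SKNe (Γ₃ ++ some k :: Γ₂ ++ some j :: Γ₁) N l →
    ((N.hsubst Γ₃.length k (V.weaken Γ₃.length)).hsubst
        (Γ₃.length + Γ₂.length) j (U.weaken (Γ₃.length + Γ₂.length))) =
    ((N.hsubst (Γ₃.length + Γ₂.length + 1) j
          (U.weaken (Γ₃.length + Γ₂.length + 1))).hsubst
        Γ₃.length k ((V.hsubst Γ₂.length j (U.weaken Γ₂.length)).weaken Γ₃.length))
  | j, k, Γ₃, Γ₂, Γ₁, U, V, N, l, hU, hV, hN => by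
    cases hN with
    | @varApp _ x j' s _ hx hs =>
      have hsIH := commSp j k Γ₃ Γ₂ Γ₁ U V s _ l hU hV hs
      simp only [List.append_assoc, List.cons_append] at hx hs
      by_cases h1 : x = Γ₃.length
      · -- the inner (Y) variable
        subst h1
        rw [List.getElem?_append_right (Nat.le_refl _), Nat.sub_self] at hx
        simp only [List.getElem?_cons_zero, Option.some_inj] at hx
        subst hx
        have hVw : SKTy ((Γ₃ ++ Γ₂) ++ some j :: Γ₁) (V.weaken Γ₃.length) k := by
          have := wkTyN Γ₃ (Γ₂ ++ some j :: Γ₁) V k hV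
          simpa [List.append_assoc] using this
        have hssub : SSp ((Γ₃ ++ Γ₂) ++ some j :: Γ₁) k
            (s.hsubst Γ₃.length k (V.weaken Γ₃.length)) l := by
          have := sSp k Γ₃ (Γ₂ ++ some j :: Γ₁) V k s l hV hs
          simpa [List.append_assoc] using this
        have hG := commG j k (Γ₃ ++ Γ₂) Γ₁ U (V.weaken Γ₃.length)
          (s.hsubst Γ₃.length k (V.weaken Γ₃.length)) l hU hVw hssub
        simp only [List.length_append] at hG
        have hhead : (V.weaken Γ₃.length).hsubst (Γ₃.length + Γ₂.length) j
            (U.weaken (Γ₃.length + Γ₂.length)) =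
            (V.hsubst Γ₂.length j (U.weaken Γ₂.length)).weaken Γ₃.length := by
          rw [hsubst_weaken, weaken_add,
            show Γ₂.length + Γ₃.length = Γ₃.length + Γ₂.length from Nat.add_comm _ _]
        rw [hsubst_var_hit, hsubst_var_miss _ _ (by omega), if_neg (by omega : ¬
          Γ₃.length + Γ₂.length + 1 < Γ₃.length), hG, hhead, hsIH, hsubst_var_hit]
      · by_cases h2 : x = Γ₃.length + Γ₂.length + 1
        · -- the outer (X) variable
          subst h2
          have hx' : j' = j := by
            rw [List.getElem?_append_right
              (show Γ₃.length ≤ Γ₃.length + Γ₂.length + 1 from by omega)] at hx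
            rw [show Γ₃.length + Γ₂.length + 1 - Γ₃.length = Γ₂.length + 1 from by omega] at hx
            simp only [List.getElem?_cons_succ] at hx
            rw [List.getElem?_append_right (Nat.le_refl _), Nat.sub_self] at hx
            simp only [List.getElem?_cons_zero, Option.some_inj] at hx
            exact hx.symm
          rw [hx'] at hs
          have hV' : SKTy (Γ₂ ++ Γ₁) (V.hsubst Γ₂.length j (U.weaken Γ₂.length)) k :=
            sTy j Γ₂ Γ₁ U V k hU hV
          have hUw : SKTy (Γ₃ ++ some k :: (Γ₂ ++ Γ₁))
              (U.weaken (Γ₃.length + Γ₂.length + 1)) j := by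
            have := wkTyN (Γ₃ ++ some k :: Γ₂) Γ₁ U j hU
            simpa [List.append_assoc, List.length_append,
              show Γ₃.length + (Γ₂.length + 1) = Γ₃.length + Γ₂.length + 1 from by omega]
              using this
          have hssub : SSp (Γ₃ ++ some k :: (Γ₂ ++ Γ₁)) j
              (s.hsubst (Γ₃.length + Γ₂.length + 1) j
                (U.weaken (Γ₃.length + Γ₂.length + 1))) l := by
            have := sSp j (Γ₃ ++ some k :: Γ₂) Γ₁ U j s l hU
              (by simpa [List.append_assoc] using hs)
            simpa [List.append_assoc, List.length_append,
              show Γ₃.length + (Γ₂.length + 1) = Γ₃.length + Γ₂.length + 1 from by omega]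
              using this
          have hG := commG k j Γ₃ (Γ₂ ++ Γ₁) (V.hsubst Γ₂.length j (U.weaken Γ₂.length))
            (U.weaken (Γ₃.length + Γ₂.length + 1))
            (s.hsubst (Γ₃.length + Γ₂.length + 1) j
              (U.weaken (Γ₃.length + Γ₂.length + 1))) l hV'
            (by simpa [List.append_assoc] using hUw)
            (by simpa [List.append_assoc] using hssub)
          have hcan : (U.weaken (Γ₃.length + Γ₂.length + 1)).hsubst Γ₃.length k
              ((V.hsubst Γ₂.length j (U.weaken Γ₂.length)).weaken Γ₃.length) =
              U.weaken (Γ₃.length + Γ₂.length) :=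
            weaken_cancel _ _ (by omega) _ _ _
          rw [hsubst_var_miss _ Γ₃.length (by omega),
            if_pos (by omega : Γ₃.length < Γ₃.length + Γ₂.length + 1)]
          simp only [Nat.add_sub_cancel]
          rw [hsubst_var_hit (Γ₃.length + Γ₂.length),
            hsubst_var_hit (Γ₃.length + Γ₂.length + 1), hG, hcan, hsIH]
        · -- other variables
          rw [hsubst_var_miss x Γ₃.length h1,
            hsubst_var_miss x (Γ₃.length + Γ₂.length + 1) h2,
            hsubst_var_miss _ (Γ₃.length + Γ₂.length) (by split_ifs <;> omega),
            hsubst_var_miss _ Γ₃.length (by split_ifs <;> omega), hsIH]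
          congr 2
          split_ifs <;> first | rfl | omega | (congr 1; omega)
  termination_by j k Γ₃ Γ₂ Γ₁ U V N l hU hV hN =>
  (sizeOf j + sizeOf k, 2, sizeOf N, 0)
decreasing_by
  all_goals simp_wf
  all_goals try subst_vars
  all_goals simp [Prod.lex_def]
  all_goals omega

theorem commSp : ∀ (j k : SKind) (Γ₃ Γ₂ Γ₁ : SCtx) (U V : SpTy) (s : SpSpine) (l₁ l₂ : SKind),
    SKTy Γ₁ U j → SKTy (Γ₂ ++ some j :: Γ₁) V k →
    SSp (Γ₃ ++ some k :: Γ₂ ++ some j :: Γ₁) l₁ s l₂ →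
    ((s.hsubst Γ₃.length k (V.weaken Γ₃.length)).hsubst
        (Γ₃.length + Γ₂.length) j (U.weaken (Γ₃.length + Γ₂.length))) =
    ((s.hsubst (Γ₃.length + Γ₂.length + 1) j
          (U.weaken (Γ₃.length + Γ₂.length + 1))).hsubst
        Γ₃.length k ((V.hsubst Γ₂.length j (U.weaken Γ₂.length)).weaken Γ₃.length))
  | j, k, Γ₃, Γ₂, Γ₁, U, V, s, l₁, l₂, hU, hV, hs => by
    cases hs with
    | nil => simp [SpSpine.hsubst]
    | cons ha hs2 =>
      simp [SpSpine.hsubst,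
        commTy j k Γ₃ Γ₂ Γ₁ U V _ _ hU hV ha,
        commSp j k Γ₃ Γ₂ Γ₁ U V _ _ _ hU hV hs2]
termination_by j k Γ₃ Γ₂ Γ₁ U V s l₁ l₂ hU hV hs =>
  (sizeOf j + sizeOf k, 2, sizeOf s, 0)
decreasing_by
  all_goals simp_wf
  all_goals try subst_vars
  all_goals simp [Prod.lex_def]
  all_goals omega

theorem commG : ∀ (σ κ : SKind) (Δ₂ Δ₁ : SCtx) (U d : SpTy) (s : SpSpine) (l : SKind),
    SKTy Δ₁ U σ → SKTy (Δ₂ ++ some σ :: Δ₁) d κ → SSp (Δ₂ ++ some σ :: Δ₁) κ s l →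
    (SpTy.rappSp d κ s).hsubst Δ₂.length σ (U.weaken Δ₂.length) =
      SpTy.rappSp (d.hsubst Δ₂.length σ (U.weaken Δ₂.length)) κ
        (s.hsubst Δ₂.length σ (U.weaken Δ₂.length))
  | σ, κ, Δ₂, Δ₁, U, d, s, l, hU, hd, hs => by
    cases hs with
    | nil => simp [SpTy.rappSp, SpSpine.hsubst]
    | @cons _ a j1 j2 s2 _ ha hs2 =>
      have hrd : SKTy (Δ₂ ++ some σ :: Δ₁) (d.rapp (.arr j1 j2) a) j2 := by
        have := rappK (.arr j1 j2) (Δ₂ ++ some σ :: Δ₁) d (.cons a .nil) j2 hd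
          (SSp.cons ha SSp.nil)
        simpa [SpTy.rappSp] using this
      have hG := commG σ j2 Δ₂ Δ₁ U _ s2 l hU hrd hs2
      have h1 := commG1 σ j1 j2 Δ₂ Δ₁ U d a hU hd ha
      simp only [SpTy.rappSp, SpSpine.hsubst]
      rw [hG, h1]
termination_by σ κ Δ₂ Δ₁ U d s l hU hd hs =>
  (sizeOf σ + sizeOf κ, 1, 0, 0)
decreasing_by
  all_goals simp_wf
  all_goals try subst_vars
  all_goals simp [Prod.lex_def]
  all_goals omega

theorem commG1 : ∀ (σ k1 k2 : SKind) (Δ₂ Δ₁ : SCtx) (U d w : SpTy),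
    SKTy Δ₁ U σ → SKTy (Δ₂ ++ some σ :: Δ₁) d (.arr k1 k2) →
    SKTy (Δ₂ ++ some σ :: Δ₁) w k1 →
    (d.rapp (.arr k1 k2) w).hsubst Δ₂.length σ (U.weaken Δ₂.length) =
      (d.hsubst Δ₂.length σ (U.weaken Δ₂.length)).rapp (.arr k1 k2)
        (w.hsubst Δ₂.length σ (U.weaken Δ₂.length))
  | σ, k1, k2, Δ₂, Δ₁, U, d, w, hU, hd, hw => by
    cases hd with
    | @lam _ J V kk hJ hV =>
      have hc := commTy σ J.shape [] Δ₂ Δ₁ U w V k2 hU hw (by simpa using hV)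
      simp only [List.length_nil, List.nil_append, weaken_zero, Nat.zero_add] at hc
      simp only [SpTy.rapp, SpTy.hsubst, SpSpine.hsubst, ← weaken_succ]
      exact hc
termination_by σ k1 k2 Δ₂ Δ₁ U d w hU hd hw =>
  (sizeOf σ + sizeOf k1 + sizeOf k2 + 1, 0, 0, 0)
decreasing_by
  all_goals simp_wf
  all_goals try subst_vars
  all_goals simp [Prod.lex_def]
  all_goals omega
end
/-- **Hereditary substitutions of simply kinded types commute**: given
`γ₁ ⊢ U : j`, `γ₁, X:j, γ₂ ⊢ V : k` and a subject simply kinded in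
`γ₁, X:j, γ₂, Y:k, γ₃` (so that, in de Bruijn representation, `Y` is the
index `γ₃.length` and `X` the index `γ₃.length + 1 + γ₂.length`, and the
substituted values are weakened accordingly), we have
`W[Y:=V]_k[X:=U]_j ≡ W[X:=U]_j[Y:=V[X:=U]_j]_k`, and analogously for kinds,
neutral types, spines, and reducing applications. -/
theorem hsubst_comm :
    ∀ (γ₁ γ₂ γ₃ : SCtx) (j k : SKind) (U V : SpTy),
      SKTy γ₁ U j →
      SKTy (γ₂ ++ some j :: γ₁) V k →
      (∀ (W : SpTy) (l : SKind),
        SKTy (γ₃ ++ some k :: γ₂ ++ some j :: γ₁) W l →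
        ((W.hsubst γ₃.length k (V.weaken γ₃.length)).hsubst
            (γ₃.length + γ₂.length) j (U.weaken (γ₃.length + γ₂.length))) =
        ((W.hsubst (γ₃.length + γ₂.length + 1) j
              (U.weaken (γ₃.length + γ₂.length + 1))).hsubst
            γ₃.length k
            ((V.hsubst γ₂.length j (U.weaken γ₂.length)).weaken γ₃.length))) ∧
      (∀ (J : SpKd),
        SWfKd (γ₃ ++ some k :: γ₂ ++ some j :: γ₁) J →
        ((J.hsubst γ₃.length k (V.weaken γ₃.length)).hsubst
            (γ₃.length + γ₂.length) j (U.weaken (γ₃.length + γ₂.length))) =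
        ((J.hsubst (γ₃.length + γ₂.length + 1) j
              (U.weaken (γ₃.length + γ₂.length + 1))).hsubst
            γ₃.length k
            ((V.hsubst γ₂.length j (U.weaken γ₂.length)).weaken γ₃.length))) ∧
      (∀ (N : SpTy) (l : SKind),
        SKNe (γ₃ ++ some k :: γ₂ ++ some j :: γ₁) N l →
        ((N.hsubst γ₃.length k (V.weaken γ₃.length)).hsubst
            (γ₃.length + γ₂.length) j (U.weaken (γ₃.length + γ₂.length))) =
        ((N.hsubst (γ₃.length + γ₂.length + 1) j
              (U.weaken (γ₃.length + γ₂.length + 1))).hsubst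
            γ₃.length k
            ((V.hsubst γ₂.length j (U.weaken γ₂.length)).weaken γ₃.length))) ∧
      (∀ (s : SpSpine) (l₁ l₂ : SKind),
        SSp (γ₃ ++ some k :: γ₂ ++ some j :: γ₁) l₁ s l₂ →
        ((s.hsubst γ₃.length k (V.weaken γ₃.length)).hsubst
            (γ₃.length + γ₂.length) j (U.weaken (γ₃.length + γ₂.length))) =
        ((s.hsubst (γ₃.length + γ₂.length + 1) j
              (U.weaken (γ₃.length + γ₂.length + 1))).hsubst
            γ₃.length k
            ((V.hsubst γ₂.length j (U.weaken γ₂.length)).weaken γ₃.length))) ∧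
      (∀ (W : SpTy) (k₁ k₂ : SKind),
        k = SKind.arr k₁ k₂ →
        SKTy (γ₂ ++ some j :: γ₁) W k₁ →
        ((V.rapp (.arr k₁ k₂) W).hsubst γ₂.length j (U.weaken γ₂.length)) =
        ((V.hsubst γ₂.length j (U.weaken γ₂.length)).rapp (.arr k₁ k₂)
            (W.hsubst γ₂.length j (U.weaken γ₂.length)))) := by
  intro γ₁ γ₂ γ₃ j k U V hU hV
  refine ⟨fun W l hW => commTy j k γ₃ γ₂ γ₁ U V W l hU hV hW,
    fun J hJ => commKd j k γ₃ γ₂ γ₁ U V J hU hV hJ,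
    fun N l hN => commNe j k γ₃ γ₂ γ₁ U V N l hU hV hN,
    fun s l₁ l₂ hs => commSp j k γ₃ γ₂ γ₁ U V s l₁ l₂ hU hV hs,
    ?_⟩
  rintro W k₁ k₂ rfl hW
  exact commG1 j k₁ k₂ γ₂ γ₁ U V W hU hV hW
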